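/- The 6-vertex graph with vertex set {1,2,3,4,5,6} and edge set {{4,5},{5,6},{4,6},{1,4},{1,2},{2,5},{1,3},{3,6}} (that is, a triangle on {4,5,6}, with vertex 1 adjacent to vertex 4, vertex 2 adjacent to vertices 1 and 5, and vertex 3 adjacent to vertices 1 and 6) is minimally unlabellable: it is not labellable, but every proper induced subgraph of it is labellable. -/
import Mathlib


/-- `H` is labellable: for some positive integer `k` the vertices of `H` can be
injectively labelled by `k`-element subsets of `ℕ` so that two distinct vertices
are adjacent if and only if their labels intersect in a set of size `k - 1`. -/
def Labellable {V : Type*} (H : SimpleGraph V) : Prop :=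
  ∃ k : ℕ, 0 < k ∧ ∃ ℓ : V → Finset ℕ, Function.Injective ℓ ∧
    (∀ v, (ℓ v).card = k) ∧
    ∀ u v : V, u ≠ v → (H.Adj u v ↔ (ℓ u ∩ ℓ v).card = k - 1)

/-- The 6-vertex graph with vertex set `{1,…,6}` (vertex `i` is encoded as
`i - 1 : Fin 6`) and edge set
`{{4,5},{5,6},{4,6},{1,4},{1,2},{2,5},{1,3},{3,6}}`: a triangle on `{4,5,6}`,
with vertex `1` adjacent to vertex `4`, vertex `2` adjacent to vertices `1` and
`5`, and vertex `3` adjacent to vertices `1` and `6`. -/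
def triangleWithThreePendantPaths : SimpleGraph (Fin 6) :=
  SimpleGraph.fromRel (fun a b =>
    (a.val + 1, b.val + 1) ∈
      [(4, 5), (5, 6), (4, 6), (1, 4), (1, 2), (2, 5), (1, 3), (3, 6)])



lemma subset_of_card_inter {s t : Finset ℕ} (h : s.card ≤ (s ∩ t).card) : s ⊆ t :=
  Finset.inter_eq_left.mp (Finset.eq_of_subset_of_card_le Finset.inter_subset_left h)

lemma card_inter_split (S : Finset ℕ) {A C : Finset ℕ} (h : A ⊆ C) :
    (S ∩ C).card = (S ∩ A).card + (S ∩ (C \ A)).card := by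
  have e : S ∩ C = (S ∩ A) ∪ (S ∩ (C \ A)) := by
    ext x
    have hx := @h x
    simp only [Finset.mem_inter, Finset.mem_union, Finset.mem_sdiff] at *
    tauto
  rw [e, Finset.card_union_of_disjoint]
  rw [Finset.disjoint_left]
  intro x hx hx'
  simp only [Finset.mem_inter, Finset.mem_sdiff] at *
  tauto

/-- Type-1 pendant analysis: `P` adjacent to `C`, non-adjacent to `D`,
where `A ⊆ C ∩ D` has card `m+1`. -/
lemma pend1 {m : ℕ} {A C D P : Finset ℕ} (hAC : A ⊆ C) (hAD : A ⊆ D)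
    (hCc : C.card = m + 2) (hPc : P.card = m + 2) (hA : A.card = m + 1)
    (hPC : (P ∩ C).card = m + 1) (hPD : (P ∩ D).card ≤ m) :
    (P ∩ A).card = m ∧ (C \ A) ⊆ P ∧ (P \ C).card = 1 := by
  have hCa : (C \ A).card = 1 := by rw [Finset.card_sdiff_of_subset hAC]; omega
  have h1 : (P ∩ A).card ≤ m := by
    calc (P ∩ A).card ≤ (P ∩ D).card :=
          Finset.card_le_card (Finset.inter_subset_inter (Finset.Subset.refl P) hAD)
      _ ≤ m := hPD
  have h2 := card_inter_split P hAC
  have h3 : (P ∩ (C \ A)).card ≤ 1 := hCa ▸ Finset.card_le_card Finset.inter_subset_right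
  have h4 : (P ∩ (C \ A)).card = 1 := by omega
  refine ⟨by omega, ?_, ?_⟩
  · apply subset_of_card_inter
    rw [Finset.inter_comm]
    omega
  · have := Finset.card_inter_add_card_sdiff P C
    omega

/-- From the analysis of `P` and `Q` joined by an edge (type 1). -/
lemma merge1 {m : ℕ} {A C P Q : Finset ℕ} (hAC : A ⊆ C)
    (hPA : (P ∩ A).card = m) (hPCs : (P \ C).card = 1)
    (hQCa : (Q ∩ (C \ A)).card = 0)
    (hPQ : (P ∩ Q).card = m + 1) :
    (P ∩ A) ⊆ Q ∧ (P \ C) ⊆ Q := by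
  have key := Finset.card_inter_add_card_sdiff (P ∩ Q) C
  have hsub1 : (P ∩ Q) ∩ C ⊆ P ∩ A := by
    intro x hx
    simp only [Finset.mem_inter] at hx ⊢
    refine ⟨hx.1.1, ?_⟩
    by_contra hxA
    have hxm : x ∈ Q ∩ (C \ A) := by
      simp only [Finset.mem_inter, Finset.mem_sdiff]
      tauto
    have := Finset.card_eq_zero.mp hQCa
    rw [this] at hxm
    exact absurd hxm (Finset.notMem_empty x)
  have hsub2 : (P ∩ Q) \ C ⊆ P \ C := by
    intro x hx
    simp only [Finset.mem_sdiff, Finset.mem_inter] at hx ⊢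
    tauto
  have hc1 : ((P ∩ Q) ∩ C).card ≤ m := hPA ▸ Finset.card_le_card hsub1
  have hc2 : ((P ∩ Q) \ C).card ≤ 1 := hPCs ▸ Finset.card_le_card hsub2
  have e1 : (P ∩ Q) ∩ C = P ∩ A := Finset.eq_of_subset_of_card_le hsub1 (by omega)
  have e2 : (P ∩ Q) \ C = P \ C := Finset.eq_of_subset_of_card_le hsub2 (by omega)
  constructor
  · rw [← e1]; intro x hx; simp only [Finset.mem_inter] at hx; exact hx.1.2
  · rw [← e2]; intro x hx; simp only [Finset.mem_sdiff, Finset.mem_inter] at hx; exact hx.1.2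


lemma avoid1 {m : ℕ} {A C Q : Finset ℕ} (hAC : A ⊆ C)
    (hQA : (Q ∩ A).card = m) (hQC : (Q ∩ C).card ≤ m) :
    (Q ∩ (C \ A)).card = 0 := by
  have := card_inter_split Q hAC; omega

/-- Type-1 triangle: the three labels share a common `(k-1)`-set. -/
lemma key1 {m : ℕ} {C D E P Q R : Finset ℕ}
    (hC : C.card = m+2) (hD : D.card = m+2) (hE : E.card = m+2)
    (hP : P.card = m+2) (hQ : Q.card = m+2) (hR : R.card = m+2)
    (hPC : (P∩C).card = m+1) (hPQ : (P∩Q).card = m+1) (hQD : (Q∩D).card = m+1)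
    (hPR : (P∩R).card = m+1) (hRE : (R∩E).card = m+1)
    (hPD : (P∩D).card ≤ m) (hPE : (P∩E).card ≤ m)
    (hQC : (Q∩C).card ≤ m) (hQE : (Q∩E).card ≤ m)
    (hRC : (R∩C).card ≤ m) (hRD : (R∩D).card ≤ m)
    (hQR : (Q∩R).card ≤ m)
    {A : Finset ℕ} (hAC : A ⊆ C) (hAD : A ⊆ D) (hAE : A ⊆ E)
    (hA : A.card = m+1) : False := by
  -- pendant analyses
  obtain ⟨hPA, hCaP, hPCs⟩ := pend1 hAC hAD hC hP hA hPC hPD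
  obtain ⟨hQA, hDbQ, hQDs⟩ := pend1 hAD hAE hD hQ hA hQD hQE
  obtain ⟨hRA, hEcR, hREs⟩ := pend1 hAE hAC hE hR hA hRE hRC
  have hQCa : (Q ∩ (C \ A)).card = 0 := avoid1 hAC hQA hQC
  have hRCa : (R ∩ (C \ A)).card = 0 := avoid1 hAC hRA hRC
  obtain ⟨hPAQ, hPCQ⟩ := merge1 hAC hPA hPCs hQCa hPQ
  obtain ⟨hPAR, hPCR⟩ := merge1 hAC hPA hPCs hRCa hPR
  -- build a large subset of Q ∩ R
  have hsub : (P ∩ A) ∪ (P \ C) ⊆ Q ∩ R := by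
    intro x hx
    rw [Finset.mem_union] at hx
    rw [Finset.mem_inter]
    rcases hx with hx | hx
    · exact ⟨hPAQ hx, hPAR hx⟩
    · exact ⟨hPCQ hx, hPCR hx⟩
  have hdisj : Disjoint (P ∩ A) (P \ C) := by
    rw [Finset.disjoint_left]
    intro x hx hx'
    simp only [Finset.mem_inter] at hx
    simp only [Finset.mem_sdiff] at hx'
    exact hx'.2 (hAC hx.2)
  have hcard : ((P ∩ A) ∪ (P \ C)).card = m + 1 := by
    rw [Finset.card_union_of_disjoint hdisj, hPA, hPCs]
  have hle := Finset.card_le_card hsub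
  rw [hcard] at hle
  exact Nat.not_succ_le_self m (le_trans hle hQR)

lemma card_union3 {m : ℕ} {C D E : Finset ℕ}
    (hC : C.card = m+2) (hD : D.card = m+2) (hE : E.card = m+2)
    (hCD : (C∩D).card = m+1) (hCE : (C∩E).card = m+1) (hDE : (D∩E).card = m+1)
    (hA : (C∩D∩E).card = m) : (C∪D∪E).card = m+3 := by
  have e1 := Finset.card_union_add_card_inter C D
  have e2 : (C∪D)∩E = (C∩E)∪(D∩E) := by
    ext x; simp only [Finset.mem_inter, Finset.mem_union]; tauto
  have e4 : (C∩E)∩(D∩E) = C∩D∩E := by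
    ext x; simp only [Finset.mem_inter]; tauto
  have e3 := Finset.card_union_add_card_inter (C∩E) (D∩E)
  have e5 := Finset.card_union_add_card_inter (C∪D) E
  rw [e2] at e5; rw [e4] at e3
  omega

lemma ne_of_inter_card {m : ℕ} {C D : Finset ℕ} (hC : C.card = m+2)
    (hCD : (C∩D).card = m+1) : C ≠ D := by
  intro h
  rw [← h, Finset.inter_self, hC] at hCD
  omega

lemma sdiff_disj {B C D : Finset ℕ} (hCB : C ⊆ B) (hDB : D ⊆ B) (hne : C ≠ D)
    (hPc : (B\C).card = 1) (hQd : (B\D).card = 1) : (B\C) ∩ (B\D) = ∅ := by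
  obtain ⟨p, hp⟩ := Finset.card_eq_one.mp hPc
  obtain ⟨q, hq⟩ := Finset.card_eq_one.mp hQd
  rw [hp, hq]
  rcases eq_or_ne p q with rfl | hpq
  · exfalso
    apply hne
    have h1 : B \ (B \ C) = C := Finset.sdiff_sdiff_eq_self hCB
    have h2 : B \ (B \ D) = D := Finset.sdiff_sdiff_eq_self hDB
    rw [← h1, ← h2, hp, hq]
  · exact Finset.singleton_inter_of_notMem (Finset.notMem_singleton.mpr hpq)

lemma card_sdiff_small {m : ℕ} {B C : Finset ℕ} (h : C ⊆ B) (hB : B.card = m+1)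
    (hC : C.card = m) : (B\C).card = 1 := by
  rw [Finset.card_sdiff_of_subset h, hB, hC]; omega

lemma card_sdiff_small' {m : ℕ} {B C : Finset ℕ} (h : C ⊆ B) (hB : B.card = m+1)
    (hC : C.card = 1) : (B\C).card = m := by
  rw [Finset.card_sdiff_of_subset h, hB, hC]; omega

/-- Type-2 pendant analysis. -/
lemma pend2 {m : ℕ} {B C D E P : Finset ℕ} (hCB : C ⊆ B) (hDB : D ⊆ B) (hEB : E ⊆ B)
    (hB : B.card = m+3) (hC : C.card = m+2) (hD : D.card = m+2) (hE : E.card = m+2)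
    (hP : P.card = m+2)
    (hPC : (P∩C).card = m+1) (hPD : (P∩D).card ≤ m) (hPE : (P∩E).card ≤ m) :
    (P∩B).card = m+1 ∧ (P ∩ (B\C)).card = 0 ∧ (B\D) ⊆ P ∧ (B\E) ⊆ P ∧ (P\B).card = 1 := by
  have sC := card_inter_split P hCB
  have sD := card_inter_split P hDB
  have sE := card_inter_split P hEB
  have c1 : (B\C).card = 1 := by rw [Finset.card_sdiff_of_subset hCB, hB, hC]; omega
  have c2 : (B\D).card = 1 := by rw [Finset.card_sdiff_of_subset hDB, hB, hD]; omega
  have c3 : (B\E).card = 1 := by rw [Finset.card_sdiff_of_subset hEB, hB, hE]; omega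
  have b1 : (P ∩ (B\C)).card ≤ 1 := c1 ▸ Finset.card_le_card Finset.inter_subset_right
  have b2 : (P ∩ (B\D)).card ≤ 1 := c2 ▸ Finset.card_le_card Finset.inter_subset_right
  have b3 : (P ∩ (B\E)).card ≤ 1 := c3 ▸ Finset.card_le_card Finset.inter_subset_right
  have hPB : (P∩B).card ≤ m+2 := hP ▸ Finset.card_le_card Finset.inter_subset_left
  refine ⟨by omega, by omega, ?_, ?_, ?_⟩
  · apply subset_of_card_inter; rw [Finset.inter_comm]; omega
  · apply subset_of_card_inter; rw [Finset.inter_comm]; omega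
  · have := Finset.card_inter_add_card_sdiff P B
    omega

/-- Type-2 merge along an edge. -/
lemma merge2 {m : ℕ} {B P Q Qd : Finset ℕ}
    (hPB : (P∩B).card = m+1) (hPBs : (P\B).card = 1)
    (hQdP : Qd ⊆ P) (hQdB : Qd ⊆ B) (hQd : Qd.card = 1) (hQQd : (Q∩Qd).card = 0)
    (hPQ : (P∩Q).card = m+1) :
    (P∩B)\Qd ⊆ Q ∧ (P\B) ⊆ Q := by
  have key := Finset.card_inter_add_card_sdiff (P∩Q) B
  have hQdPB : Qd ⊆ P∩B := Finset.subset_inter hQdP hQdB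
  have hcs : ((P∩B)\Qd).card = m := card_sdiff_small' hQdPB hPB hQd
  have hQe : Q ∩ Qd = ∅ := Finset.card_eq_zero.mp hQQd
  have hsub1 : (P∩Q)∩B ⊆ (P∩B)\Qd := by
    intro x hx
    simp only [Finset.mem_inter, Finset.mem_sdiff] at hx ⊢
    refine ⟨⟨hx.1.1, hx.2⟩, fun hxQd => ?_⟩
    have : x ∈ Q ∩ Qd := Finset.mem_inter.mpr ⟨hx.1.2, hxQd⟩
    rw [hQe] at this
    exact absurd this (Finset.notMem_empty x)
  have hsub2 : (P∩Q)\B ⊆ P\B := by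
    intro x hx
    simp only [Finset.mem_sdiff, Finset.mem_inter] at hx ⊢
    tauto
  have hc1 : ((P∩Q)∩B).card ≤ m := hcs ▸ Finset.card_le_card hsub1
  have hc2 : ((P∩Q)\B).card ≤ 1 := hPBs ▸ Finset.card_le_card hsub2
  have e1 : (P∩Q)∩B = (P∩B)\Qd := Finset.eq_of_subset_of_card_le hsub1 (by omega)
  have e2 : (P∩Q)\B = P\B := Finset.eq_of_subset_of_card_le hsub2 (by omega)
  constructor
  · rw [← e1]; intro x hx; rw [Finset.mem_inter] at hx; exact (Finset.mem_inter.mp hx.1).2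
  · rw [← e2]; intro x hx
    rw [Finset.mem_sdiff] at hx; exact (Finset.mem_inter.mp hx.1).2

lemma one_le_m {m : ℕ} {Qd Re PB : Finset ℕ} (h1 : Qd ⊆ PB) (h2 : Re ⊆ PB)
    (hd : Qd ∩ Re = ∅) (c1 : Qd.card = 1) (c2 : Re.card = 1) (hPB : PB.card = m+1) :
    1 ≤ m := by
  have hu : (Qd ∪ Re).card ≤ PB.card := Finset.card_le_card (Finset.union_subset h1 h2)
  rw [Finset.card_union_of_disjoint (Finset.disjoint_iff_inter_eq_empty.mpr hd)] at hu
  omega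

lemma finl {m : ℕ} {X Pc Py QR : Finset ℕ} (hX : X.card = m - 1) (hm : 1 ≤ m)
    (hPc : Pc.card = 1) (hPy : Py.card = 1) (hd1 : Disjoint X Pc)
    (hd2 : Disjoint (X ∪ Pc) Py)
    (hsub : X ∪ Pc ∪ Py ⊆ QR) (hQR : QR.card ≤ m) : False := by
  have hle := Finset.card_le_card hsub
  rw [Finset.card_union_of_disjoint hd2, Finset.card_union_of_disjoint hd1] at hle
  omega

/-- Type-2 triangle: the three labels are contained in a common `(k+1)`-set `B`. -/
lemma key2 {m : ℕ} {B C D E P Q R : Finset ℕ}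
    (hCB : C ⊆ B) (hDB : D ⊆ B) (hEB : E ⊆ B) (hB : B.card = m+3)
    (hC : C.card = m+2) (hD : D.card = m+2) (hE : E.card = m+2)
    (hP : P.card = m+2) (hQ : Q.card = m+2) (hR : R.card = m+2)
    (hDE : (D∩E).card = m+1)
    (hPC : (P∩C).card = m+1) (hPQ : (P∩Q).card = m+1) (hQD : (Q∩D).card = m+1)
    (hPR : (P∩R).card = m+1) (hRE : (R∩E).card = m+1)
    (hPD : (P∩D).card ≤ m) (hPE : (P∩E).card ≤ m)
    (hQC : (Q∩C).card ≤ m) (hQE : (Q∩E).card ≤ m)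
    (hRC : (R∩C).card ≤ m) (hRD : (R∩D).card ≤ m)
    (hQR : (Q∩R).card ≤ m) : False := by
  have c1 : (B\C).card = 1 := card_sdiff_small hCB hB hC
  have c2 : (B\D).card = 1 := card_sdiff_small hDB hB hD
  have c3 : (B\E).card = 1 := card_sdiff_small hEB hB hE
  obtain ⟨hPB, hPPc, hQdP, hReP, hPBs⟩ := pend2 hCB hDB hEB hB hC hD hE hP hPC hPD hPE
  obtain ⟨hQB, hQQd, hPcQ, hReQ, hQBs⟩ := pend2 hDB hCB hEB hB hD hC hE hQ hQD hQC hQE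
  obtain ⟨hRB, hRRe, hPcR, hQdR, hRBs⟩ := pend2 hEB hCB hDB hB hE hC hD hR hRE hRC hRD
  obtain ⟨hPQB, hPyQ⟩ := merge2 hPB hPBs hQdP Finset.sdiff_subset c2 hQQd hPQ
  obtain ⟨hPRB, hPyR⟩ := merge2 hPB hPBs hReP Finset.sdiff_subset c3 hRRe hPR
  have hDEne : D ≠ E := ne_of_inter_card hD hDE
  have hQdRe : (B\D) ∩ (B\E) = ∅ := sdiff_disj hDB hEB hDEne c2 c3
  have hQdPB : (B\D) ⊆ P∩B := Finset.subset_inter hQdP Finset.sdiff_subset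
  have hRePB : (B\E) ⊆ P∩B := Finset.subset_inter hReP Finset.sdiff_subset
  have hm : 1 ≤ m := one_le_m hQdPB hRePB hQdRe c2 c3 hPB
  -- X is the common core
  have hcs : ((P∩B)\(B\D)).card = m := card_sdiff_small' hQdPB hPB c2
  have hReX : (B\E) ⊆ (P∩B)\(B\D) := by
    intro x hx
    rw [Finset.mem_sdiff]
    refine ⟨hRePB hx, fun hxd => ?_⟩
    have : x ∈ (B\D) ∩ (B\E) := Finset.mem_inter.mpr ⟨hxd, hx⟩
    rw [hQdRe] at this
    exact absurd this (Finset.notMem_empty x)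
  have hX : (((P∩B)\(B\D))\(B\E)).card = m - 1 := by
    rw [Finset.card_sdiff_of_subset hReX, hcs, c3]
  have hXQ : ((P∩B)\(B\D))\(B\E) ⊆ Q := fun x hx => hPQB (Finset.mem_sdiff.mp hx).1
  have hXR : ((P∩B)\(B\D))\(B\E) ⊆ R := by
    intro x hx
    apply hPRB
    rw [Finset.mem_sdiff] at hx ⊢
    exact ⟨(Finset.mem_sdiff.mp hx.1).1, hx.2⟩
  -- assemble the subset of Q ∩ R
  have hsub : (((P∩B)\(B\D))\(B\E)) ∪ (B\C) ∪ (P\B) ⊆ Q ∩ R := by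
    intro x hx
    rw [Finset.mem_union, Finset.mem_union] at hx
    rw [Finset.mem_inter]
    rcases hx with (hx | hx) | hx
    · exact ⟨hXQ hx, hXR hx⟩
    · exact ⟨hPcQ hx, hPcR hx⟩
    · exact ⟨hPyQ hx, hPyR hx⟩
  have hPPc' : P ∩ (B\C) = ∅ := Finset.card_eq_zero.mp hPPc
  have hd1 : Disjoint (((P∩B)\(B\D))\(B\E)) (B\C) := by
    rw [Finset.disjoint_left]
    intro x hx hx'
    have hxP : x ∈ P := (Finset.mem_inter.mp (Finset.mem_sdiff.mp (Finset.mem_sdiff.mp hx).1).1).1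
    have : x ∈ P ∩ (B\C) := Finset.mem_inter.mpr ⟨hxP, hx'⟩
    rw [hPPc'] at this
    exact absurd this (Finset.notMem_empty x)
  have hd2 : Disjoint ((((P∩B)\(B\D))\(B\E)) ∪ (B\C)) (P\B) := by
    rw [Finset.disjoint_left]
    intro x hx hx'
    have hxB : x ∈ B := by
      rw [Finset.mem_union] at hx
      rcases hx with hx | hx
      · exact (Finset.mem_inter.mp (Finset.mem_sdiff.mp (Finset.mem_sdiff.mp hx).1).1).2
      · exact (Finset.mem_sdiff.mp hx).1
    exact (Finset.mem_sdiff.mp hx').2 hxB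
  exact finl hX hm c1 hPBs hd1 hd2 hsub hQR

lemma tri_dichotomy {m : ℕ} {C D E : Finset ℕ} (hC : C.card = m+2)
    (hCD : (C∩D).card = m+1) (hCE : (C∩E).card = m+1) :
    (C∩D∩E).card = m ∨ (C∩D∩E).card = m+1 := by
  have hup : (C∩D∩E).card ≤ m+1 := hCD ▸ Finset.card_le_card Finset.inter_subset_left
  have e1 := Finset.card_union_add_card_inter (C∩D) (C∩E)
  have e2 : (C∩D)∩(C∩E) = C∩D∩E := by
    ext x; simp only [Finset.mem_inter]; tauto
  have e3 : (C∩D)∪(C∩E) ⊆ C :=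
    Finset.union_subset Finset.inter_subset_left Finset.inter_subset_left
  have e4 := Finset.card_le_card e3
  rw [e2] at e1
  rw [hC] at e4
  omega

/-- The master contradiction. -/
lemma key {m : ℕ} {C D E P Q R : Finset ℕ}
    (hC : C.card = m+2) (hD : D.card = m+2) (hE : E.card = m+2)
    (hP : P.card = m+2) (hQ : Q.card = m+2) (hR : R.card = m+2)
    (hCD : (C∩D).card = m+1) (hCE : (C∩E).card = m+1) (hDE : (D∩E).card = m+1)
    (hPC : (P∩C).card = m+1) (hPQ : (P∩Q).card = m+1) (hQD : (Q∩D).card = m+1)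
    (hPR : (P∩R).card = m+1) (hRE : (R∩E).card = m+1)
    (hPD : (P∩D).card ≤ m) (hPE : (P∩E).card ≤ m)
    (hQC : (Q∩C).card ≤ m) (hQE : (Q∩E).card ≤ m)
    (hRC : (R∩C).card ≤ m) (hRD : (R∩D).card ≤ m)
    (hQR : (Q∩R).card ≤ m) : False := by
  rcases tri_dichotomy hC hCD hCE with hA | hA
  · -- type 2 : common superset B
    have hCB : C ⊆ C∪D∪E := Finset.subset_union_left.trans Finset.subset_union_left
    have hDB : D ⊆ C∪D∪E := Finset.subset_union_right.trans Finset.subset_union_left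
    have hEB : E ⊆ C∪D∪E := Finset.subset_union_right
    have hB : (C∪D∪E).card = m+3 := card_union3 hC hD hE hCD hCE hDE hA
    exact key2 hCB hDB hEB hB hC hD hE hP hQ hR hDE hPC hPQ hQD hPR hRE
      hPD hPE hQC hQE hRC hRD hQR
  · -- type 1 : common (k-1)-subset A
    have hAC : C∩D∩E ⊆ C := fun x hx => by
      rw [Finset.mem_inter, Finset.mem_inter] at hx; exact hx.1.1
    have hAD : C∩D∩E ⊆ D := fun x hx => by
      rw [Finset.mem_inter, Finset.mem_inter] at hx; exact hx.1.2
    have hAE : C∩D∩E ⊆ E := fun x hx => by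
      rw [Finset.mem_inter] at hx; exact hx.2
    exact key1 hC hD hE hP hQ hR hPC hPQ hQD hPR hRE hPD hPE hQC hQE hRC hRD hQR
      hAC hAD hAE hA

lemma nonadj_le {k : ℕ} (hk : 0 < k) {u v : Finset ℕ} (hu : u.card = k) (hv : v.card = k)
    (hne : u ≠ v) (h : (u ∩ v).card ≠ k - 1) : (u ∩ v).card + 2 ≤ k := by
  have h1 : (u ∩ v).card ≤ k := hu ▸ Finset.card_le_card Finset.inter_subset_left
  rcases eq_or_lt_of_le h1 with he | hlt
  · exfalso
    have h2 : u ⊆ v := subset_of_card_inter (by omega)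
    exact hne (Finset.eq_of_subset_of_card_le h2 (by omega))
  · omega

lemma nonadj_le' {m : ℕ} {u v : Finset ℕ} (hu : u.card = m+2) (hv : v.card = m+2)
    (hne : u ≠ v) (h : (u∩v).card ≠ m+1) : (u∩v).card ≤ m := by
  have := nonadj_le (k := m+2) (by omega) hu hv hne h
  omega

instance : DecidableRel triangleWithThreePendantPaths.Adj := fun a b =>
  decidable_of_iff _ (SimpleGraph.fromRel_adj _ a b).symm

lemma labellable_induce_of (G : SimpleGraph (Fin 6)) (s : Set (Fin 6)) (v : Fin 6) (hv : v ∉ s)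
    (k : ℕ) (hk : 0 < k) (ℓ : Fin 6 → Finset ℕ)
    (hcard : ∀ a, a ≠ v → (ℓ a).card = k)
    (H : ∀ a b : Fin 6, a ≠ v → b ≠ v → a ≠ b →
      (ℓ a ≠ ℓ b ∧ (G.Adj a b ↔ (ℓ a ∩ ℓ b).card = k - 1))) :
    Labellable (G.induce s) := by
  have hne : ∀ a : s, (a : Fin 6) ≠ v := fun a h => hv (h ▸ a.2)
  refine ⟨k, hk, fun x => ℓ x.1, ?_, fun a => hcard a.1 (hne a), ?_⟩
  · intro a b hab
    by_contra hne'
    have h1 : (a : Fin 6) ≠ (b : Fin 6) := fun h => hne' (Subtype.ext h)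
    exact (H a.1 b.1 (hne a) (hne b) h1).1 hab
  · intro a b hab
    have h1 : (a : Fin 6) ≠ (b : Fin 6) := fun h => hab (Subtype.ext h)
    exact (H a.1 b.1 (hne a) (hne b) h1).2

/-- This 6-vertex graph is minimally unlabellable: it is not labellable, but
every proper induced subgraph of it is labellable. -/
theorem triangleWithThreePendantPaths_minimally_unlabellable :
    ¬ Labellable triangleWithThreePendantPaths ∧
      ∀ s : Set (Fin 6), s ≠ Set.univ →
        Labellable (triangleWithThreePendantPaths.induce s) := by
  constructor
  · rintro ⟨k, hk, ℓ, hinj, hcard, hadj⟩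
    have hLne : ∀ a b : Fin 6, a ≠ b → ℓ a ≠ ℓ b := fun a b hab h => hab (hinj h)
    have hnadj : ∀ a b : Fin 6, a ≠ b → ¬ triangleWithThreePendantPaths.Adj a b →
        (ℓ a ∩ ℓ b).card ≠ k - 1 := fun a b hab hn h => hn ((hadj a b hab).mpr h)
    have hQR0 := nonadj_le hk (hcard 1) (hcard 2) (hLne 1 2 (by decide))
      (hnadj 1 2 (by decide) (by decide))
    obtain ⟨m, rfl⟩ : ∃ m, k = m + 2 := ⟨k - 2, by omega⟩
    have eCD : (ℓ 3 ∩ ℓ 4).card = m+1 := (hadj 3 4 (by decide)).mp (by decide)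
    have eCE : (ℓ 3 ∩ ℓ 5).card = m+1 := (hadj 3 5 (by decide)).mp (by decide)
    have eDE : (ℓ 4 ∩ ℓ 5).card = m+1 := (hadj 4 5 (by decide)).mp (by decide)
    have ePC : (ℓ 0 ∩ ℓ 3).card = m+1 := (hadj 0 3 (by decide)).mp (by decide)
    have ePQ : (ℓ 0 ∩ ℓ 1).card = m+1 := (hadj 0 1 (by decide)).mp (by decide)
    have eQD : (ℓ 1 ∩ ℓ 4).card = m+1 := (hadj 1 4 (by decide)).mp (by decide)
    have ePR : (ℓ 0 ∩ ℓ 2).card = m+1 := (hadj 0 2 (by decide)).mp (by decide)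
    have eRE : (ℓ 2 ∩ ℓ 5).card = m+1 := (hadj 2 5 (by decide)).mp (by decide)
    have nPD : (ℓ 0 ∩ ℓ 4).card ≤ m := nonadj_le' (hcard 0) (hcard 4)
      (hLne 0 4 (by decide)) (hnadj 0 4 (by decide) (by decide))
    have nPE : (ℓ 0 ∩ ℓ 5).card ≤ m := nonadj_le' (hcard 0) (hcard 5)
      (hLne 0 5 (by decide)) (hnadj 0 5 (by decide) (by decide))
    have nQC : (ℓ 1 ∩ ℓ 3).card ≤ m := nonadj_le' (hcard 1) (hcard 3)
      (hLne 1 3 (by decide)) (hnadj 1 3 (by decide) (by decide))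
    have nQE : (ℓ 1 ∩ ℓ 5).card ≤ m := nonadj_le' (hcard 1) (hcard 5)
      (hLne 1 5 (by decide)) (hnadj 1 5 (by decide) (by decide))
    have nRC : (ℓ 2 ∩ ℓ 3).card ≤ m := nonadj_le' (hcard 2) (hcard 3)
      (hLne 2 3 (by decide)) (hnadj 2 3 (by decide) (by decide))
    have nRD : (ℓ 2 ∩ ℓ 4).card ≤ m := nonadj_le' (hcard 2) (hcard 4)
      (hLne 2 4 (by decide)) (hnadj 2 4 (by decide) (by decide))
    have nQR : (ℓ 1 ∩ ℓ 2).card ≤ m := nonadj_le' (hcard 1) (hcard 2)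
      (hLne 1 2 (by decide)) (hnadj 1 2 (by decide) (by decide))
    exact key (hcard 3) (hcard 4) (hcard 5) (hcard 0) (hcard 1) (hcard 2)
      eCD eCE eDE ePC ePQ eQD ePR eRE nPD nPE nQC nQE nRC nRD nQR
  · intro s hs
    obtain ⟨v, hv⟩ := Set.ne_univ_iff_exists_notMem s |>.mp hs
    fin_cases v
    · exact labellable_induce_of _ s 0 hv 3 (by norm_num)
        ![∅, {1,4,6}, {2,5,7}, {1,2,3}, {1,2,4}, {1,2,5}] (by decide) (by decide)
    · exact labellable_induce_of _ s 1 hv 3 (by norm_num)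
        ![{1,3,6}, ∅, {1,5,6}, {1,2,3}, {1,2,4}, {1,2,5}] (by decide) (by decide)
    · exact labellable_induce_of _ s 2 hv 3 (by norm_num)
        ![{1,3,6}, {1,4,6}, ∅, {1,2,3}, {1,2,4}, {1,2,5}] (by decide) (by decide)
    · exact labellable_induce_of _ s 3 hv 2 (by norm_num)
        ![{1,2}, {2,3}, {1,5}, ∅, {3,4}, {4,5}] (by decide) (by decide)
    · exact labellable_induce_of _ s 4 hv 3 (by norm_num)
        ![{0,1,2}, {1,2,5}, {0,1,4}, {0,2,3}, ∅, {0,3,4}] (by decide) (by decide)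
    · exact labellable_induce_of _ s 5 hv 3 (by norm_num)
        ![{0,1,2}, {0,1,4}, {1,2,5}, {0,2,3}, {0,3,4}, ∅] (by decide) (by decide)
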